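/- If a graph G satisfies μ(G) ≤ k (matching number at most k) and every vertex has c-degree at most k (i.e., min(d(v), d̄(v)) ≤ k for all v), and G has n ≥ 2k(k+2) vertices, then G contains a similarity class of size at least n − 2k(k+1). -/

import Mathlib

/-- Two vertices are similar if no third vertex is adjacent to exactly one of them. -/
def VertexSimilar {V : Type} (G : SimpleGraph V) (x y : V) : Prop :=
  ∀ z, z ≠ x → z ≠ y → (G.Adj z x ↔ G.Adj z y)

/-- If `G` has `n ≥ 2k(k+2)` vertices, matching number at most `k`, and every vertex has
c-degree at most `k` (i.e. `min(d(v), n-1-d(v)) ≤ k`), then `G` has a similarity class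
(a set of pairwise similar vertices) of size at least `n - 2k(k+1)`. -/
theorem large_similarity_class (k n : ℕ) (V : Type) [Fintype V] (G : SimpleGraph V)
    (hcard : Fintype.card V = n) (hn : 2 * k * (k + 2) ≤ n)
    (hmatching : ∀ (m : ℕ) (e : Fin m → V × V),
      (∀ i, G.Adj (e i).1 (e i).2) →
      (∀ i j, i ≠ j →
        (e i).1 ≠ (e j).1 ∧ (e i).1 ≠ (e j).2 ∧ (e i).2 ≠ (e j).1 ∧ (e i).2 ≠ (e j).2) →
      m ≤ k)
    (hcdeg : ∀ v : V,
      min (Nat.card ↥(G.neighborSet v)) (n - 1 - Nat.card ↥(G.neighborSet v)) ≤ k) :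
    ∃ S : Finset V, n - 2 * k * (k + 1) ≤ S.card ∧ ∀ x ∈ S, ∀ y ∈ S, VertexSimilar G x y := by
  classical
  have hdeg : ∀ v : V, min (G.degree v) (n - 1 - G.degree v) ≤ k := by
    intro v
    have h := hcdeg v
    rwa [Nat.card_eq_fintype_card, SimpleGraph.card_neighborSet_eq_degree] at h
  by_cases hk : k = 0
  · subst hk
    have hne : ∀ a b : V, ¬ G.Adj a b := by
      intro a b hab
      have := hmatching 1 (fun _ => (a, b)) (fun _ => hab)
        (fun i j hij => absurd (Subsingleton.elim i j) hij)
      omega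
    refine ⟨Finset.univ, by simp [Finset.card_univ, hcard], ?_⟩
    intro x _ y _ z _ _
    exact iff_of_false (hne z x) (hne z y)
  have hk1 : 1 ≤ k := Nat.one_le_iff_ne_zero.mpr hk
  -- a maximum matching as a finset of ordered pairs
  set P : Finset (V × V) → Prop := fun M =>
    (∀ p ∈ M, G.Adj p.1 p.2) ∧
    (∀ p ∈ M, ∀ q ∈ M, p ≠ q → p.1 ≠ q.1 ∧ p.1 ≠ q.2 ∧ p.2 ≠ q.1 ∧ p.2 ≠ q.2) with hPdef
  obtain ⟨M, hMP, hMmax⟩ : ∃ M, P M ∧ ∀ M', P M' → M'.card ≤ M.card := by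
    obtain ⟨M, hM, hmax⟩ := Finset.exists_max_image
      ((Finset.univ : Finset (Finset (V × V))).filter P) Finset.card
      ⟨∅, by simp [hPdef]⟩
    exact ⟨M, (Finset.mem_filter.mp hM).2,
      fun M' h' => hmax M' (Finset.mem_filter.mpr ⟨Finset.mem_univ _, h'⟩)⟩
  have hMk : M.card ≤ k := by
    refine hmatching M.card (fun i => (M.equivFin.symm i : V × V)) ?_ ?_
    · intro i; exact hMP.1 _ (M.equivFin.symm i).2
    · intro i j hij
      refine hMP.2 _ (M.equivFin.symm i).2 _ (M.equivFin.symm j).2 ?_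
      intro h
      exact hij (M.equivFin.symm.injective (Subtype.ext h))
  set C : Finset V := M.image Prod.fst ∪ M.image Prod.snd with hCdef
  have hCk : C.card ≤ 2 * k := by
    calc C.card ≤ (M.image Prod.fst).card + (M.image Prod.snd).card :=
          Finset.card_union_le _ _
      _ ≤ M.card + M.card := add_le_add Finset.card_image_le Finset.card_image_le
      _ ≤ 2 * k := by omega
  have hmemC : ∀ p ∈ M, p.1 ∈ C ∧ p.2 ∈ C := by
    intro p hp
    exact ⟨Finset.mem_union_left _ (Finset.mem_image_of_mem _ hp),
      Finset.mem_union_right _ (Finset.mem_image_of_mem _ hp)⟩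
  -- uncovered vertices form an independent set
  have hind : ∀ x y : V, x ∉ C → y ∉ C → ¬ G.Adj x y := by
    intro x y hx hy hadj
    have hxyM : (x, y) ∉ M := fun h => hx (hmemC _ h).1
    have hP' : P (insert (x, y) M) := by
      constructor
      · intro p hp
        rcases Finset.mem_insert.mp hp with h | h
        · subst h; exact hadj
        · exact hMP.1 p h
      · intro p hp q hq hpq
        rcases Finset.mem_insert.mp hp with h | h <;>
          rcases Finset.mem_insert.mp hq with h' | h'
        · exact absurd (h.trans h'.symm) hpq
        · subst h
          have hq' := hmemC q h'
          exact ⟨fun e => hx ((show x = q.1 from e) ▸ hq'.1),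
            fun e => hx ((show x = q.2 from e) ▸ hq'.2),
            fun e => hy ((show y = q.1 from e) ▸ hq'.1),
            fun e => hy ((show y = q.2 from e) ▸ hq'.2)⟩
        · subst h'
          have hp' := hmemC p h
          exact ⟨fun e => hx ((show p.1 = x from e) ▸ hp'.1),
            fun e => hy ((show p.1 = y from e) ▸ hp'.1),
            fun e => hx ((show p.2 = x from e) ▸ hp'.2),
            fun e => hy ((show p.2 = y from e) ▸ hp'.2)⟩
        · exact hMP.2 p h q h' hpq
    have := hMmax _ hP'
    rw [Finset.card_insert_of_notMem hxyM] at this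
    omega
  set I : Finset V := Finset.univ \ C with hIdef
  have hIcard : I.card = n - C.card := by
    rw [hIdef, Finset.card_sdiff_of_subset (Finset.subset_univ _), Finset.card_univ, hcard]
  have hNI : ∀ v ∈ I, G.neighborFinset v ⊆ C := by
    intro v hv w hw
    by_contra hwC
    exact hind v w (Finset.mem_sdiff.mp hv).2 hwC ((G.mem_neighborFinset v w).mp hw)
  have hIdeg : ∀ v ∈ I, G.degree v ≤ 2 * k := by
    intro v hv
    exact le_trans (Finset.card_le_card (hNI v hv)) hCk
  set H : Finset V := Finset.univ.filter (fun u => k < G.degree u) with hHdef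
  have hHdeg : ∀ u ∈ H, n - 1 - G.degree u ≤ k := by
    intro u hu
    have h1 : k < G.degree u := (Finset.mem_filter.mp hu).2
    rcases min_le_iff.mp (hdeg u) with h | h
    · omega
    · exact h
  have hHC : H ⊆ C := by
    intro u hu
    by_contra huC
    have huI : u ∈ I := Finset.mem_sdiff.mpr ⟨Finset.mem_univ _, huC⟩
    have h1 := hIdeg u huI
    have h2 := hHdeg u hu
    have h3 : k < G.degree u := (Finset.mem_filter.mp hu).2
    have h4 : n ≤ 3 * k + 1 := by omega
    nlinarith [hn, hk1]
  set S : Finset V := I.filter (fun v => ∀ u ∈ C, (G.Adj u v ↔ u ∈ H)) with hSdef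
  have hSim : ∀ v ∈ S, ∀ z : V, G.Adj z v ↔ z ∈ H := by
    intro v hv z
    obtain ⟨hvI, hvcond⟩ := Finset.mem_filter.mp hv
    constructor
    · intro hzv
      have hzC : z ∈ C := hNI v hvI ((G.mem_neighborFinset v z).mpr hzv.symm)
      exact (hvcond z hzC).mp hzv
    · intro hzH
      exact (hvcond z (hHC hzH)).mpr hzH
  have hBad : (I \ S).card ≤ 2 * k * k := by
    have hsub : I \ S ⊆ C.biUnion (fun u => I.filter (fun v => ¬(G.Adj u v ↔ u ∈ H))) := by
      intro v hv
      obtain ⟨hvI, hvS⟩ := Finset.mem_sdiff.mp hv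
      rw [hSdef, Finset.mem_filter] at hvS
      have hex : ∃ u ∈ C, ¬(G.Adj u v ↔ u ∈ H) := by
        by_contra hno
        push_neg at hno
        exact hvS ⟨hvI, fun u hu => hno u hu⟩
      obtain ⟨u, huC, hucond⟩ := hex
      exact Finset.mem_biUnion.mpr ⟨u, huC, Finset.mem_filter.mpr ⟨hvI, hucond⟩⟩
    have hper : ∀ u ∈ C, (I.filter (fun v => ¬(G.Adj u v ↔ u ∈ H))).card ≤ k := by
      intro u huC
      by_cases hu : u ∈ H
      · have hsub2 : I.filter (fun v => ¬(G.Adj u v ↔ u ∈ H)) ⊆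
            Finset.univ \ insert u (G.neighborFinset u) := by
          intro v hv
          obtain ⟨hvI, hcond⟩ := Finset.mem_filter.mp hv
          have hnadj : ¬ G.Adj u v := fun h => hcond ⟨fun _ => hu, fun _ => h⟩
          refine Finset.mem_sdiff.mpr ⟨Finset.mem_univ _, ?_⟩
          intro hmem
          rcases Finset.mem_insert.mp hmem with h | h
          · exact (Finset.mem_sdiff.mp hvI).2 (h ▸ huC)
          · exact hnadj ((G.mem_neighborFinset u v).mp h)
        have hc : (Finset.univ \ insert u (G.neighborFinset u)).card
            = n - (G.degree u + 1) := by
          rw [Finset.card_sdiff_of_subset (Finset.subset_univ _), Finset.card_univ, hcard,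
            Finset.card_insert_of_notMem (by simp), SimpleGraph.card_neighborFinset_eq_degree]
        have h2 := hHdeg u hu
        have := Finset.card_le_card hsub2
        omega
      · have hdu : G.degree u ≤ k := by
          by_contra h
          exact hu (Finset.mem_filter.mpr ⟨Finset.mem_univ _, not_le.mp h⟩)
        have hsub2 : I.filter (fun v => ¬(G.Adj u v ↔ u ∈ H)) ⊆ G.neighborFinset u := by
          intro v hv
          obtain ⟨hvI, hcond⟩ := Finset.mem_filter.mp hv
          have hadj : G.Adj u v := by
            by_contra h
            exact hcond (iff_of_false h hu)
          exact (G.mem_neighborFinset u v).mpr hadj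
        have := Finset.card_le_card hsub2
        rw [SimpleGraph.card_neighborFinset_eq_degree] at this
        omega
    calc (I \ S).card ≤ _ := Finset.card_le_card hsub
      _ ≤ ∑ u ∈ C, (I.filter (fun v => ¬(G.Adj u v ↔ u ∈ H))).card :=
          Finset.card_biUnion_le
      _ ≤ ∑ _u ∈ C, k := Finset.sum_le_sum hper
      _ = C.card * k := by rw [Finset.sum_const, smul_eq_mul]
      _ ≤ 2 * k * k := Nat.mul_le_mul_right _ hCk
  refine ⟨S, ?_, ?_⟩
  · have hSI : S ⊆ I := Finset.filter_subset _ _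
    have h4 : (I \ S).card = I.card - S.card := Finset.card_sdiff_of_subset hSI
    have h5 : S.card ≤ I.card := Finset.card_le_card hSI
    calc n - 2 * k * (k + 1) = n - (2 * k + 2 * k * k) := by
          congr 1; ring
      _ ≤ n - (C.card + (I \ S).card) := Nat.sub_le_sub_left (add_le_add hCk hBad) n
      _ = (n - C.card) - (I \ S).card := (Nat.sub_sub _ _ _).symm
      _ = I.card - (I \ S).card := by rw [hIcard]
      _ ≤ S.card := by omega
  · intro x hx y hy z _ _
    rw [hSim x hx z, hSim y hy z]
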